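/- det M₁ = 5 · (−1)^n. (In the paper's notation, det M₁ = 5(−1)^{t₀−1}, which via the formula tb(K₁) = −3 + det M₁ / det M yields the Thurston–Bennequin invariant tb(K₁) = 2.) -/

import Mathlib

open Matrix

/-- The linking matrix `M` from Section 6 of the paper: an `n x n` matrix over `Q`
(indices `0, ..., n-1` here correspond to the paper's `1, ..., n`) with diagonal entries `-2`
except the last one which is `-1`, entries `-1` on the super- and sub-diagonal,
extra entries `-1` at positions `(1,3)` and `(3,1)` (paper indexing), and zeros elsewhere. -/
def linkM (n : ℕ) : Matrix (Fin n) (Fin n) ℚ :=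
  Matrix.of fun i j =>
    if i = j then (if (i : ℕ) = n - 1 then -1 else -2)
    else if (i : ℕ) + 1 = (j : ℕ) ∨ (j : ℕ) + 1 = (i : ℕ) then -1
    else if ((i : ℕ) = 0 ∧ (j : ℕ) = 2) ∨ ((i : ℕ) = 2 ∧ (j : ℕ) = 0) then -1
    else 0

/-- The extended linking matrix: an `(n+1) x (n+1)` matrix (indices `0, 1, ..., n` as in the
paper), whose `(0,0)` entry is `0`, whose first row and first column (off the corner) are a
given vector `c`, and whose remaining `n x n` block is the linking matrix `linkM n`. -/
def extM (n : ℕ) (c : Fin n → ℚ) : Matrix (Fin (n + 1)) (Fin (n + 1)) ℚ :=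
  Matrix.of (Fin.cases (Fin.cases (0 : ℚ) c)
    (fun i => Fin.cases (c i) (fun j => linkM n i j)))

/-- The vector of linking numbers of `K₁` with the surgery curves: `c₁ = -1`, `c₂ = -3`,
`c₃ = -1` (paper indexing), all other entries `0`. -/
def vecC1 (n : ℕ) : Fin n → ℚ := fun i =>
  if (i : ℕ) = 0 then -1 else if (i : ℕ) = 1 then -3 else if (i : ℕ) = 2 then -1 else 0

/-- Entry formula for the extended matrix, as a function of natural-number indices. -/
def gEnt (m : ℕ) (d : ℚ) (i j : ℕ) : ℚ :=
  if i = 0 ∧ j = 0 then 0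
  else if i = 0 then (if j = 1 then -1 else if j = 2 then -3 else if j = 3 then -1 else 0)
  else if j = 0 then (if i = 1 then -1 else if i = 2 then -3 else if i = 3 then -1 else 0)
  else if i = j then (if i = m then d else -2)
  else if i + 1 = j ∨ j + 1 = i then -1
  else if (i = 1 ∧ j = 3) ∨ (i = 3 ∧ j = 1) then -1
  else 0

/-- Generalized extended matrix with last diagonal entry `d`. -/
def Bm (m : ℕ) (d : ℚ) : Matrix (Fin (m + 1)) (Fin (m + 1)) ℚ :=
  Matrix.of fun i j => gEnt m d (i : ℕ) (j : ℕ)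

lemma Bm_apply (m : ℕ) (d : ℚ) (i j : Fin (m + 1)) : Bm m d i j = gEnt m d (i : ℕ) (j : ℕ) :=
  rfl

lemma extM_eq (n : ℕ) : extM n (vecC1 n) = Bm n (-1) := by
  ext i j
  induction i using Fin.cases with
  | zero =>
    induction j using Fin.cases with
    | zero =>
      simp [extM, Bm, gEnt]
    | succ j =>
      have hj := j.isLt
      simp only [extM, Bm, Matrix.of_apply, Fin.cases_zero, Fin.cases_succ, vecC1, gEnt,
        Fin.val_zero, Fin.val_succ, true_and, and_true, false_and, and_false, if_true, if_false,
        Nat.succ_ne_zero, ite_false, ite_true]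
      split_ifs <;> first | rfl | omega | simp_all
  | succ i =>
    induction j using Fin.cases with
    | zero =>
      have hi := i.isLt
      simp only [extM, Bm, Matrix.of_apply, Fin.cases_zero, Fin.cases_succ, vecC1, gEnt,
        Fin.val_zero, Fin.val_succ, true_and, and_true, false_and, and_false, if_true, if_false,
        Nat.succ_ne_zero, ite_false, ite_true]
      split_ifs <;> first | rfl | omega | simp_all
    | succ j =>
      have hi := i.isLt
      have hj := j.isLt
      simp only [extM, Bm, Matrix.of_apply, Fin.cases_succ, linkM, gEnt, Fin.val_succ,
        Fin.ext_iff]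
      split_ifs <;> first | rfl | omega | simp_all

lemma sum_two {α : Type*} [Fintype α] [DecidableEq α] (f : α → ℚ) (a b : α) (hab : a ≠ b)
    (h : ∀ x, x ≠ a → x ≠ b → f x = 0) : ∑ x, f x = f a + f b := by
  have key : ∑ x ∈ ({a, b} : Finset α), f x = ∑ x, f x := by
    refine Finset.sum_subset (Finset.subset_univ _) (fun x _ hx => ?_)
    simp only [Finset.mem_insert, Finset.mem_singleton, not_or] at hx
    exact h x hx.1 hx.2
  rw [← key, Finset.sum_pair hab]

lemma sum_one {α : Type*} [Fintype α] [DecidableEq α] (f : α → ℚ) (a : α)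
    (h : ∀ x, x ≠ a → f x = 0) : ∑ x, f x = f a :=
  Finset.sum_eq_single_of_mem a (Finset.mem_univ a) (fun b _ hb => h b hb)

lemma val_succAbove {n : ℕ} (p : Fin (n + 1)) (i : Fin n) :
    ((p.succAbove i : Fin (n + 1)) : ℕ) = if (i : ℕ) < (p : ℕ) then (i : ℕ) else (i : ℕ) + 1 := by
  rw [Fin.succAbove]
  split_ifs with h1 h2 h2 <;>
    simp_all [Fin.lt_def, Fin.coe_castSucc, Fin.val_succ]

set_option maxHeartbeats 1000000 in
/-- Laplace recursion for the determinant of `Bm`. -/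
lemma det_recB (m : ℕ) (hm : 3 ≤ m) (d : ℚ) :
    (Bm (m + 2) d).det = d * (Bm (m + 1) (-2)).det - (Bm m (-2)).det := by
  have hlast : ((Fin.last (m + 2) : Fin (m + 3)) : ℕ) = m + 2 := rfl
  set j1 : Fin (m + 3) := ⟨m + 1, by omega⟩ with hj1
  set j2 : Fin (m + 3) := Fin.last (m + 2) with hj2
  rw [Matrix.det_succ_row (Bm (m + 2) d) (Fin.last (m + 2))]
  rw [sum_two _ j1 j2 (by simp [hj1, hj2, Fin.ext_iff]) ?_]
  · -- two remaining terms
    -- minor for j2 : top-left block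
    have hminor2 : (Bm (m + 2) d).submatrix (Fin.last (m + 2)).succAbove j2.succAbove
        = Bm (m + 1) (-2) := by
      ext i j
      have hi := i.isLt
      have hj := j.isLt
      simp only [hj2, Matrix.submatrix_apply, Fin.succAbove_last, Bm, Matrix.of_apply,
        Fin.coe_castSucc, gEnt]
      split_ifs <;> first | rfl | omega | tauto
    -- minor for j1
    have hminor1 : ((Bm (m + 2) d).submatrix (Fin.last (m + 2)).succAbove j1.succAbove).det
        = -(Bm m (-2)).det := by
      set A := (Bm (m + 2) d).submatrix (Fin.last (m + 2)).succAbove j1.succAbove with hA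
      have hAval : ∀ (i : Fin (m + 2)) (j : Fin (m + 2)),
          A i j = gEnt (m + 2) d (i : ℕ) (if (j : ℕ) < m + 1 then (j : ℕ) else (j : ℕ) + 1) := by
        intro i j
        simp only [hA, Matrix.submatrix_apply, Fin.succAbove_last, Bm, Matrix.of_apply,
          Fin.coe_castSucc]
        congr 1
        rw [val_succAbove]
      rw [Matrix.det_succ_column A (Fin.last (m + 1))]
      rw [sum_one _ (Fin.last (m + 1)) ?_]
      · have hent : A (Fin.last (m + 1)) (Fin.last (m + 1)) = -1 := by
          rw [hAval]
          simp only [Fin.val_last]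
          rw [if_neg (by omega)]
          simp only [gEnt]
          split_ifs <;> first | rfl | omega | tauto
        have hminor : (A.submatrix (Fin.last (m + 1)).succAbove (Fin.last (m + 1)).succAbove)
            = Bm m (-2) := by
          ext i j
          have hi := i.isLt
          have hj := j.isLt
          simp only [Matrix.submatrix_apply, Fin.succAbove_last]
          rw [hAval]
          simp only [Fin.coe_castSucc, if_pos (by omega : (j : ℕ) < m + 1)]
          simp only [Bm, Matrix.of_apply, gEnt]
          split_ifs <;> first | rfl | omega | tauto
        rw [hent, hminor]
        have hsgn : ((-1 : ℚ)) ^ (((Fin.last (m + 1) : Fin (m + 2)) : ℕ)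
            + ((Fin.last (m + 1) : Fin (m + 2)) : ℕ)) = 1 := by
          simp only [Fin.val_last]
          rw [show (m + 1) + (m + 1) = 2 * (m + 1) by ring, pow_mul]
          norm_num
        rw [hsgn]
        ring
      · intro x hx
        have hxv : (x : ℕ) ≠ m + 1 := fun h => hx (Fin.ext (by simpa using h))
        have hxl := x.isLt
        rw [hAval]
        simp only [Fin.val_last]
        rw [if_neg (by omega)]
        have : gEnt (m + 2) d (x : ℕ) (m + 2) = 0 := by
          simp only [gEnt]
          split_ifs <;> first | rfl | omega | tauto
        rw [this, mul_zero, zero_mul]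
    -- entries of the last row
    have hent2 : Bm (m + 2) d (Fin.last (m + 2)) j2 = d := by
      rw [Bm_apply]
      simp only [hj2, Fin.val_last, gEnt]
      split_ifs <;> first | rfl | omega | tauto
    have hent1 : Bm (m + 2) d (Fin.last (m + 2)) j1 = -1 := by
      rw [Bm_apply]
      simp only [hj1, Fin.val_last, gEnt]
      split_ifs <;> first | rfl | omega | tauto
    have hsg1 : ((-1 : ℚ)) ^ (((Fin.last (m + 2) : Fin (m + 3)) : ℕ) + ((j1 : Fin (m+3)) : ℕ))
        = -1 := by
      simp only [Fin.val_last, hj1]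
      rw [show (m + 2) + (m + 1) = 2 * (m + 1) + 1 by ring, pow_succ, pow_mul]
      norm_num
    have hsg2 : ((-1 : ℚ)) ^ (((Fin.last (m + 2) : Fin (m + 3)) : ℕ) + ((j2 : Fin (m+3)) : ℕ))
        = 1 := by
      simp only [Fin.val_last, hj2]
      rw [show (m + 2) + (m + 2) = 2 * (m + 2) by ring, pow_mul]
      norm_num
    rw [hminor1, hminor2, hent1, hent2, hsg1, hsg2]
    ring
  · intro x hx1 hx2
    have hxv1 : (x : ℕ) ≠ m + 1 := fun h => hx1 (Fin.ext (by simpa [hj1] using h))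
    have hxv2 : (x : ℕ) ≠ m + 2 := fun h => hx2 (Fin.ext (by simpa [hj2] using h))
    have hxl := x.isLt
    have : Bm (m + 2) d (Fin.last (m + 2)) x = 0 := by
      rw [Bm_apply]
      simp only [Fin.val_last, gEnt]
      split_ifs <;> first | rfl | omega | tauto
    rw [this, mul_zero, zero_mul]

lemma detB3 : (Bm 3 (-2)).det = -19 := by
  have h : Bm 3 (-2) = !![0,-1,-3,-1; -1,-2,-1,-1; -3,-1,-2,-1; -1,-1,-1,-2] := by
    ext i j
    fin_cases i <;> fin_cases j <;> rfl
  rw [h]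
  simp [Matrix.det_succ_row_zero, Fin.sum_univ_succ]
  simp +decide [Fin.succAbove]
  norm_num

lemma detB4 : (Bm 4 (-2)).det = 24 := by
  have h : Bm 4 (-2) = !![0,-1,-3,-1,0; -1,-2,-1,-1,0; -3,-1,-2,-1,0; -1,-1,-1,-2,-1;
      0,0,0,-1,-2] := by
    ext i j
    fin_cases i <;> fin_cases j <;> rfl
  rw [h]
  simp [Matrix.det_succ_row_zero, Fin.sum_univ_succ]
  simp +decide [Fin.succAbove]
  norm_num

lemma detE4 : (Bm 4 (-1)).det = 5 := by
  have h : Bm 4 (-1) = !![0,-1,-3,-1,0; -1,-2,-1,-1,0; -3,-1,-2,-1,0; -1,-1,-1,-2,-1;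
      0,0,0,-1,-1] := by
    ext i j
    fin_cases i <;> fin_cases j <;> rfl
  rw [h]
  simp [Matrix.det_succ_row_zero, Fin.sum_univ_succ]
  simp +decide [Fin.succAbove]
  norm_num

lemma Fval : ∀ m : ℕ, (Bm (m + 3) (-2)).det = (-1 : ℚ) ^ (m + 3) * (5 * (m + 3 : ℕ) + 4)
    ∧ (Bm (m + 4) (-2)).det = (-1 : ℚ) ^ (m + 4) * (5 * (m + 4 : ℕ) + 4) := by
  intro m
  induction m with
  | zero =>
    constructor
    · rw [detB3]; norm_num
    · rw [detB4]; norm_num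
  | succ k ih =>
    refine ⟨ih.2, ?_⟩
    have h := det_recB (k + 3) (by omega) (-2)
    rw [show k + 1 + 4 = k + 3 + 2 by ring, h, ih.1, ih.2]
    rw [show k + 3 + 2 = (k + 3) + 2 by ring, pow_add, show k + 3 + 1 = (k + 3) + 1 by ring,
      pow_succ]
    push_cast
    ring

/-- `det M₁ = 5 * (-1)^n`. -/
theorem stmt_3 (n : ℕ) (hn : 4 ≤ n) :
    (extM n (vecC1 n)).det = 5 * (-1 : ℚ) ^ n := by
  rw [extM_eq]
  rcases Nat.lt_or_ge n 5 with h | h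
  · have hn4 : n = 4 := by omega
    subst hn4
    rw [detE4]; norm_num
  · obtain ⟨m, rfl⟩ : ∃ m, n = m + 5 := ⟨n - 5, by omega⟩
    have h := det_recB (m + 3) (by omega) (-1)
    rw [show m + 5 = m + 3 + 2 by ring, h, (Fval (m + 1)).1, (Fval m).1]
    rw [show m + 1 + 3 = (m + 3) + 1 by ring, pow_succ,
      show m + 3 + 2 = (m + 3) + 2 by ring, pow_add]
    push_cast
    ring
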